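/- For positive definite matrices A and B, the Wasserstein mean A◇B := ¼[A + B + (AB)^{1/2} + (BA)^{1/2}] is positive definite, and it equals |½A^{1/2} + ½U*B^{1/2}|² where U is the unitary from the polar decomposition B^{1/2}A^{1/2} = U(A^{1/2}BA^{1/2})^{1/2}. -/

import Mathlib

open Matrix Filter Asymptotics
open scoped ComplexOrder

/-- The PSD square root of a matrix (0 if not PSD). -/
noncomputable def msqrt {n : ℕ} (M : Matrix (Fin n) (Fin n) ℂ) : Matrix (Fin n) (Fin n) ℂ :=
  letI := Classical.propDecidable M.PosSemidef
  if h : M.PosSemidef then (h.1.eigenvectorUnitary : Matrix (Fin n) (Fin n) ℂ) *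
    diagonal ((↑) ∘ Real.sqrt ∘ h.1.eigenvalues) * (star h.1.eigenvectorUnitary : Matrix (Fin n) (Fin n) ℂ) else 0

/-- `(AB)^{1/2} := A^{1/2} (A^{1/2} B A^{1/2})^{1/2} A^{-1/2}`. -/
noncomputable def sqAB {n : ℕ} (A B : Matrix (Fin n) (Fin n) ℂ) : Matrix (Fin n) (Fin n) ℂ :=
  msqrt A * msqrt (msqrt A * B * msqrt A) * (msqrt A)⁻¹

/-- Bures-Wasserstein geodesic `A ◇_t B`. -/
noncomputable def geo {n : ℕ} (A B : Matrix (Fin n) (Fin n) ℂ) (t : ℝ) : Matrix (Fin n) (Fin n) ℂ :=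
  ((1 - t)^2 : ℝ) • A + (t^2 : ℝ) • B + (t * (1 - t) : ℝ) • (sqAB A B + (sqAB A B)ᴴ)

/-- Bures-Wasserstein distance. -/
noncomputable def dBW {n : ℕ} (A B : Matrix (Fin n) (Fin n) ℂ) : ℝ :=
  Real.sqrt ((Matrix.trace A).re + (Matrix.trace B).re -
    2 * (Matrix.trace (msqrt (msqrt A * B * msqrt A))).re)

lemma msqrt_of_psd {n : ℕ} {M : Matrix (Fin n) (Fin n) ℂ} (h : M.PosSemidef) :
    msqrt M = (h.1.eigenvectorUnitary : Matrix (Fin n) (Fin n) ℂ) *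
    diagonal ((↑) ∘ Real.sqrt ∘ h.1.eigenvalues) * (star h.1.eigenvectorUnitary : Matrix (Fin n) (Fin n) ℂ) := by
  rw [msqrt]
  exact dif_pos h

lemma msqrt_mul_self' {n : ℕ} {M : Matrix (Fin n) (Fin n) ℂ} (h : M.PosSemidef) :
    msqrt M * msqrt M = M := by
  rw [msqrt_of_psd h]
  have hUU : (star h.1.eigenvectorUnitary : Matrix (Fin n) (Fin n) ℂ) *
      (h.1.eigenvectorUnitary : Matrix (Fin n) (Fin n) ℂ) = 1 := Unitary.coe_star_mul_self _
  have hD : diagonal (((↑) ∘ Real.sqrt ∘ h.1.eigenvalues : Fin n → ℂ)) *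
      diagonal ((↑) ∘ Real.sqrt ∘ h.1.eigenvalues) = diagonal (RCLike.ofReal ∘ h.1.eigenvalues) := by
    rw [diagonal_mul_diagonal]
    congr 1
    funext i
    simp only [Function.comp_apply]
    rw [← Complex.ofReal_mul, Real.mul_self_sqrt (h.eigenvalues_nonneg i)]
    rfl
  conv_rhs => rw [h.1.spectral_theorem, Unitary.conjStarAlgAut_apply]
  rw [← hD]
  simp only [Matrix.mul_assoc]
  rw [← Matrix.mul_assoc (star (h.1.eigenvectorUnitary : Matrix (Fin n) (Fin n) ℂ))
    (h.1.eigenvectorUnitary : Matrix (Fin n) (Fin n) ℂ), hUU, Matrix.one_mul]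

lemma msqrt_posSemidef' {n : ℕ} {M : Matrix (Fin n) (Fin n) ℂ} (h : M.PosSemidef) :
    (msqrt M).PosSemidef := by
  rw [msqrt_of_psd h]
  have hD : (diagonal (((↑) ∘ Real.sqrt ∘ h.1.eigenvalues : Fin n → ℂ))).PosSemidef :=
    PosSemidef.diagonal (fun i => Complex.zero_le_real.mpr (Real.sqrt_nonneg _))
  exact hD.mul_mul_conjTranspose_same _

lemma posDef_smul_quarter {n : ℕ} {M : Matrix (Fin n) (Fin n) ℂ} (hM : M.PosDef) :
    ((1 / 4 : ℝ) • M).PosDef := by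
  exact hM.smul (by norm_num)

lemma posDef_conjTranspose_mul_self_of_isUnit {n : ℕ} {Y : Matrix (Fin n) (Fin n) ℂ}
    (hY : IsUnit Y) : (Yᴴ * Y).PosDef := by
  refine PosDef.of_dotProduct_mulVec_pos (Matrix.posSemidef_conjTranspose_mul_self Y).1 fun x hx => ?_
  have hYx : Y *ᵥ x ≠ 0 := by
    intro h
    exact hx (Matrix.mulVec_injective_iff_isUnit.mpr hY (by simpa using h))
  rw [← Matrix.mulVec_mulVec, Matrix.dotProduct_mulVec, Matrix.vecMul_conjTranspose, star_star]
  exact Matrix.dotProduct_star_self_pos_iff.mpr hYx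

theorem stmt16 {n : ℕ} (A B U : Matrix (Fin n) (Fin n) ℂ)
    (hA : A.PosDef) (hB : B.PosDef) (hU : U ∈ Matrix.unitaryGroup (Fin n) ℂ)
    (hpolar : msqrt B * msqrt A = U * msqrt (msqrt A * B * msqrt A)) :
    ((1 / 4 : ℝ) • (A + B + sqAB A B + (sqAB A B)ᴴ)).PosDef ∧
    (1 / 4 : ℝ) • (A + B + sqAB A B + (sqAB A B)ᴴ) =
      ((1 / 2 : ℝ) • msqrt A + (1 / 2 : ℝ) • (Uᴴ * msqrt B))ᴴ *
        ((1 / 2 : ℝ) • msqrt A + (1 / 2 : ℝ) • (Uᴴ * msqrt B)) := by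
  have hApsd := hA.posSemidef
  have hBpsd := hB.posSemidef
  have hAsq : msqrt A * msqrt A = A := msqrt_mul_self' hApsd
  have hBsq : msqrt B * msqrt B = B := msqrt_mul_self' hBpsd
  have hAh : (msqrt A)ᴴ = msqrt A := (msqrt_posSemidef' hApsd).1
  have hBh : (msqrt B)ᴴ = msqrt B := (msqrt_posSemidef' hBpsd).1
  -- invertibility of msqrt A
  have hdetA : IsUnit (msqrt A) := by
    rw [Matrix.isUnit_iff_isUnit_det, isUnit_iff_ne_zero]
    intro h
    have : A.det = 0 := by rw [← hAsq, Matrix.det_mul, h, mul_zero]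
    exact hA.det_pos.ne' this
  -- the inner PSD matrix
  have hinner : (msqrt A * B * msqrt A).PosSemidef := by
    have := hBpsd.conjTranspose_mul_mul_same (msqrt A)
    rwa [hAh] at this
  set M := msqrt (msqrt A * B * msqrt A) with hMdef
  have hMpsd : M.PosSemidef := by
    rw [hMdef]
    exact msqrt_posSemidef' hinner
  -- unitary facts
  have hUU : Uᴴ * U = 1 := by
    have := hU.1
    rwa [Matrix.star_eq_conjTranspose] at this
  have hUU' : U * Uᴴ = 1 := by
    have := hU.2
    rwa [Matrix.star_eq_conjTranspose] at this
  -- M = Uᴴ * msqrt B * msqrt A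
  have hM : Uᴴ * (msqrt B * msqrt A) = M := by
    rw [hpolar, ← Matrix.mul_assoc, hUU, Matrix.one_mul]
  -- sqAB simplification
  have hS : sqAB A B = msqrt A * (Uᴴ * (msqrt B * msqrt A)) * (msqrt A)⁻¹ := by
    rw [hM, sqAB]
  have hS' : sqAB A B = msqrt A * Uᴴ * msqrt B := by
    rw [hS]
    have : msqrt A * (Uᴴ * (msqrt B * msqrt A)) = msqrt A * Uᴴ * msqrt B * msqrt A := by
      simp only [Matrix.mul_assoc]
    rw [this, Matrix.mul_nonsing_inv_cancel_right _ _ (Matrix.isUnit_iff_isUnit_det _ |>.mp hdetA)]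
  have hSH : (sqAB A B)ᴴ = msqrt B * U * msqrt A := by
    rw [hS', Matrix.conjTranspose_mul, Matrix.conjTranspose_mul, hAh, hBh,
      Matrix.conjTranspose_conjTranspose, Matrix.mul_assoc]
  -- the key factorization
  set Y := msqrt A + Uᴴ * msqrt B with hYdef
  have hYH : Yᴴ = msqrt A + msqrt B * U := by
    rw [hYdef, Matrix.conjTranspose_add, Matrix.conjTranspose_mul, hAh, hBh,
      Matrix.conjTranspose_conjTranspose]
  have key : A + B + sqAB A B + (sqAB A B)ᴴ = Yᴴ * Y := by
    rw [hYH, hYdef, Matrix.add_mul, Matrix.mul_add, Matrix.mul_add, hAsq, hSH, hS']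
    have h4 : msqrt B * U * (Uᴴ * msqrt B) = B := by
      rw [← Matrix.mul_assoc, Matrix.mul_assoc (msqrt B) U Uᴴ, hUU', Matrix.mul_one, hBsq]
    have h2 : msqrt A * Uᴴ * msqrt B = msqrt A * (Uᴴ * msqrt B) := by
      rw [Matrix.mul_assoc]
    rw [h4, h2]
    abel
  -- Y is invertible: Y = (A + M) * (msqrt A)⁻¹
  have hYfact : Y = (A + M) * (msqrt A)⁻¹ := by
    have hdet := Matrix.isUnit_iff_isUnit_det _ |>.mp hdetA
    have h1 : A * (msqrt A)⁻¹ = msqrt A := by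
      nth_rewrite 1 [← hAsq]
      rw [Matrix.mul_nonsing_inv_cancel_right _ _ hdet]
    have h2 : M * (msqrt A)⁻¹ = Uᴴ * msqrt B := by
      rw [← hM, ← Matrix.mul_assoc, Matrix.mul_nonsing_inv_cancel_right _ _ hdet]
    rw [Matrix.add_mul, h1, h2, hYdef]
  have hAMpos : (A + M).PosDef := hA.add_posSemidef hMpsd
  have hYunit : IsUnit Y := by
    rw [hYfact]
    exact hAMpos.isUnit.mul (Matrix.isUnit_nonsing_inv_iff.mpr hdetA)
  -- the equality of matrices
  have heq : (1 / 4 : ℝ) • (A + B + sqAB A B + (sqAB A B)ᴴ) =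
      ((1 / 2 : ℝ) • msqrt A + (1 / 2 : ℝ) • (Uᴴ * msqrt B))ᴴ *
        ((1 / 2 : ℝ) • msqrt A + (1 / 2 : ℝ) • (Uᴴ * msqrt B)) := by
    have hhalf : (1 / 2 : ℝ) • msqrt A + (1 / 2 : ℝ) • (Uᴴ * msqrt B) = (1 / 2 : ℝ) • Y := by
      rw [hYdef, smul_add]
    rw [hhalf, key, Matrix.conjTranspose_smul, Matrix.smul_mul, Matrix.mul_smul, smul_smul]
    norm_num
  refine ⟨?_, heq⟩
  rw [key]
  exact posDef_smul_quarter (posDef_conjTranspose_mul_self_of_isUnit hYunit)
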